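/- arXiv:2502.15276 — 2 statements merged into one kernel-verified Lean document; each statement's English description precedes it below -/
import Mathlib

section
/- Categorical Lyapunov theorem (metric-space version): Let φ : T × E → E be a flow with equilibrium point x*. If there exists V : E → ℝ≥0 and class K functions α̲, ᾱ with α̲(d(x,x*)) ≤ V(x) ≤ ᾱ(d(x,x*)) for all x, and V(φ(t,x)) ≤ V(x) for all t, x, then x* is stable: d(φ(t,x), x*) ≤ (α̲⁻¹ ∘ ᾱ)(d(x,x*)) for all t, x. -/
open scoped NNReal

/-- A class K function on `ℝ≥0`: a strictly increasing bijection fixing `0`. -/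
def ClassK (α : ℝ≥0 → ℝ≥0) : Prop :=
  StrictMono α ∧ Function.Bijective α ∧ α 0 = 0

/-- Categorical Lyapunov theorem, metric-space version. -/
theorem lyapunov_stability {T : Type*} [AddMonoid T]
    {E : Type*} [MetricSpace E]
    (φ : T → E → E)
    (hinit : ∀ x, φ 0 x = x)
    (hcomp : ∀ t₁ t₂ x, φ t₁ (φ t₂ x) = φ (t₁ + t₂) x)
    (xs : E) (heq : ∀ t, φ t xs = xs)
    (V : E → ℝ≥0) (αl αu : ℝ≥0 → ℝ≥0)
    (hαl : ClassK αl) (hαu : ClassK αu)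
    (hbound : ∀ x, αl (nndist x xs) ≤ V x ∧ V x ≤ αu (nndist x xs))
    (hdecr : ∀ t x, V (φ t x) ≤ V x) :
    ∀ t x, nndist (φ t x) xs ≤ Function.invFun αl (αu (nndist x xs)) := by
  intro t x
  have hli : Function.LeftInverse (Function.invFun αl) αl :=
    Function.leftInverse_invFun hαl.2.1.1
  have hri : Function.RightInverse (Function.invFun αl) αl :=
    Function.rightInverse_invFun hαl.2.1.2
  have key : αl (nndist (φ t x) xs) ≤ αu (nndist x xs) :=
    le_trans (hbound (φ t x)).1 (le_trans (hdecr t x) (hbound x).2)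
  have := hαl.1.le_iff_le (a := nndist (φ t x) xs)
      (b := Function.invFun αl (αu (nndist x xs)))
  rw [hri] at this
  exact this.mp key
end

section
/- Converse Lyapunov theorem (metric-space version): Let φ : T × E → E be a flow with a stable equilibrium point x*, i.e. there is a class K function α with d(φ(t,x), x*) ≤ α(d(x,x*)) for all t, x. Then V(x) := sup_{t ∈ T} d(φ(t,x), x*) is well-defined (finite), positive definite with respect to x* (bounded below by the identity class K function applied to d(x,x*) and above by α), and decrescent: V(φ(t,x)) ≤ V(x) for all t, x. -/
open scoped NNReal

/-- Converse Lyapunov theorem, metric-space version.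
`V x := ⨆ t, nndist (φ t x) xs` is well-defined (the orbit distances are
bounded above), positive definite (bounded below by `nndist x xs` and
above by `α (nndist x xs)`), and decrescent along the flow. -/
theorem converse_lyapunov {T : Type*} [AddMonoid T]
    {E : Type*} [MetricSpace E]
    (φ : T → E → E)
    (hinit : ∀ x, φ 0 x = x)
    (hcomp : ∀ t₁ t₂ x, φ t₁ (φ t₂ x) = φ (t₁ + t₂) x)
    (xs : E) (heq : ∀ t, φ t xs = xs)
    (α : ℝ≥0 → ℝ≥0) (hα : ClassK α)
    (hstab : ∀ t x, nndist (φ t x) xs ≤ α (nndist x xs)) :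
    (∀ x, BddAbove (Set.range fun t => nndist (φ t x) xs)) ∧
    (∀ x, nndist x xs ≤ (⨆ t, nndist (φ t x) xs) ∧
      (⨆ t, nndist (φ t x) xs) ≤ α (nndist x xs)) ∧
    (∀ t x, (⨆ s, nndist (φ s (φ t x)) xs) ≤ ⨆ s, nndist (φ s x) xs) := by
  have hbdd : ∀ x, BddAbove (Set.range fun t => nndist (φ t x) xs) := fun x =>
    ⟨α (nndist x xs), fun y ⟨t, ht⟩ => ht ▸ hstab t x⟩
  refine ⟨hbdd, fun x => ⟨?_, ciSup_le fun t => hstab t x⟩, fun t x => ?_⟩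
  · have := le_ciSup (hbdd x) (0 : T)
    rwa [hinit x] at this
  · exact ciSup_le fun s => by rw [hcomp]; exact le_ciSup (hbdd x) (s + t)
end
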